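/- Let m ≥ 1 and let G = C₄ᵐ × C₂ with generators a₁,…,a_m of the order-4 factors and h of the order-2 factor. In 𝔽₂[G], let u_m = ∏_{i=1}^{m} (a_i + a_i² + a_i³) and u = 1 + h·u_m. Then the 𝔽₂-linear endomorphism of 𝔽₂[G] given by multiplication by u has range of dimension 4ᵐ (that is, u has rank 4ᵐ = |G|/2). -/

import Mathlib

noncomputable section

open MonoidAlgebra

/-- The code generated by `u` in a group algebra: the `R`-span of `{g • u : g ∈ G}`. -/
def codeGen {R : Type*} [CommSemiring R] {G : Type*} [Monoid G]
    (u : MonoidAlgebra R G) : Submodule R (MonoidAlgebra R G) :=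
  Submodule.span R (Set.range fun g : G => MonoidAlgebra.of R G g * u)

/-- The weight (support size) of an element of a group algebra. -/
def wt {R : Type*} [Semiring R] {G : Type*} (x : MonoidAlgebra R G) : ℕ :=
  x.coeff.support.card

/-- The minimum distance of the code generated by `u`: the least weight of a nonzero
element of the code. -/
def minDist {R : Type*} [CommSemiring R] {G : Type*} [Monoid G]
    (u : MonoidAlgebra R G) : ℕ :=
  sInf {n | ∃ x ∈ codeGen u, x ≠ 0 ∧ wt x = n}

/-- The group `C₄ᵐ × C₂`, written multiplicatively. -/
abbrev Gp (m : ℕ) : Type := Multiplicative ((Fin m → ZMod 4) × ZMod 2)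

/-- The generator `aᵢ` of the `i`-th copy of `C₄`. -/
def agen (m : ℕ) (i : Fin m) : Gp m := Multiplicative.ofAdd (Pi.single i 1, 0)

/-- The generator `h` of the `C₂` factor. -/
def hgen (m : ℕ) : Gp m := Multiplicative.ofAdd (0, 1)

/-- `u_m = ∏ᵢ (aᵢ + aᵢ² + aᵢ³)` in `𝔽₂[C₄ᵐ × C₂]`. -/
def um (m : ℕ) : MonoidAlgebra (ZMod 2) (Gp m) :=
  ∏ i : Fin m,
    (of (ZMod 2) (Gp m) (agen m i) + of (ZMod 2) (Gp m) (agen m i) ^ 2 +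
      of (ZMod 2) (Gp m) (agen m i) ^ 3)

/-- `u = 1 + h·u_m`. -/
def uu (m : ℕ) : MonoidAlgebra (ZMod 2) (Gp m) :=
  1 + of (ZMod 2) (Gp m) (hgen m) * um m

namespace RankUAux
open Multiplicative
variable {m : ℕ}

/-- parity of a group element -/
def snd (g : Gp m) : ZMod 2 := (Multiplicative.toAdd g).2

lemma snd_mul (g₁ g₂ : Gp m) : snd (g₁ * g₂) = snd g₁ + snd g₂ := rfl

lemma snd_agen_pow (i : Fin m) (k : ℕ) : snd (agen m i ^ k) = 0 := by
  induction k with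
  | zero => rfl
  | succ n ih => rw [pow_succ, snd_mul, ih]; simp [snd, agen]

def IsEven (x : MonoidAlgebra (ZMod 2) (Gp m)) : Prop :=
  ∀ g ∈ x.coeff.support, snd g = 0

lemma isEven_mul {x y : MonoidAlgebra (ZMod 2) (Gp m)} (hx : IsEven x) (hy : IsEven y) :
    IsEven (x * y) := by
  classical
  intro g hg
  have := MonoidAlgebra.support_coeff_mul_subset x y hg
  obtain ⟨g₁, hg₁, g₂, hg₂, rfl⟩ := Finset.mem_mul.mp this
  rw [snd_mul, hx g₁ hg₁, hy g₂ hg₂, add_zero]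

lemma isEven_one : IsEven (1 : MonoidAlgebra (ZMod 2) (Gp m)) := by
  intro g hg
  have : g ∈ ({(1 : Gp m)} : Finset _) :=
    (by simpa [MonoidAlgebra.one_def] using hg)
  simp only [Finset.mem_singleton] at this
  subst this; rfl

lemma isEven_add {x y : MonoidAlgebra (ZMod 2) (Gp m)} (hx : IsEven x) (hy : IsEven y) :
    IsEven (x + y) := by
  classical
  intro g hg
  rcases Finset.mem_union.mp (Finsupp.support_add (g₁ := x.coeff) (g₂ := y.coeff) hg) with h | h
  · exact hx g h
  · exact hy g h

lemma isEven_of {g : Gp m} (h : snd g = 0) : IsEven (of (ZMod 2) (Gp m) g) := by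
  intro g' hg'
  have : g' ∈ ({g} : Finset _) :=
    (by simpa [MonoidAlgebra.of_apply] using hg')
  simp only [Finset.mem_singleton] at this
  subst this; exact h

lemma isEven_pow_of {g : Gp m} (h : snd g = 0) (k : ℕ) :
    IsEven (of (ZMod 2) (Gp m) g ^ k) := by
  rw [← map_pow]
  apply isEven_of
  induction k with
  | zero => rfl
  | succ n ih => rw [pow_succ, snd_mul, ih, h, add_zero]

lemma isEven_um : IsEven (um m) := by
  rw [um]
  refine Finset.prod_induction _ IsEven (fun _ _ => isEven_mul) isEven_one ?_
  intro i _
  have h0 : snd (agen m i) = 0 := by simp [snd, agen]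
  have h1 : IsEven (of (ZMod 2) (Gp m) (agen m i)) := isEven_of h0
  exact isEven_add (isEven_add h1 (isEven_pow_of h0 2)) (isEven_pow_of h0 3)

def hgen' : Gp m := Multiplicative.ofAdd (0, 1)

/-- the odd part of a group element, membership in second coordinate 1 -/
def j1 (m : ℕ) : (Fin m → ZMod 4) → Gp m := fun a => Multiplicative.ofAdd (a, 1)

lemma j1_inj (m : ℕ) : Function.Injective (j1 m) := by
  intro a b h
  have := congrArg (fun g : Gp m => (Multiplicative.toAdd g).1) h
  simpa [j1] using this

/-- if the coefficients at odd elements vanish, x is even -/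
lemma isEven_of_lcomap {x : MonoidAlgebra (ZMod 2) (Gp m)}
    (hx : Finsupp.lcomapDomain (R := ZMod 2) (j1 m) (j1_inj m) x.coeff = (0 : (Fin m → ZMod 4) →₀ ZMod 2)) :
    IsEven x := by
  intro g hg
  by_contra hne
  have h1 : snd g = 1 := by
    revert hne; unfold snd; generalize (Multiplicative.toAdd g).2 = c; revert c; decide
  have hgj : g = j1 m (Multiplicative.toAdd g).1 := by
    rw [j1]
    conv_lhs => rw [← ofAdd_toAdd g]
    congr 1
    exact Prod.ext rfl h1
  have hz : x.coeff g = 0 := by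
    have := congrArg (fun y : (Fin m → ZMod 4) →₀ ZMod 2 => y (Multiplicative.toAdd g).1) hx
    simpa [Finsupp.lcomapDomain, Finsupp.comapDomain_apply, ← hgj] using this
  exact (Finsupp.mem_support_iff.mp hg) hz

/-- if x is even then x * (hgen * um) is odd -/
lemma odd_part {x : MonoidAlgebra (ZMod 2) (Gp m)} (hx : IsEven x) :
    ∀ g ∈ (x * (of (ZMod 2) (Gp m) (hgen m) * um m)).coeff.support, snd g = 1 := by
  classical
  intro g hg
  obtain ⟨g₁, hg₁, g₂, hg₂, rfl⟩ := Finset.mem_mul.mp (MonoidAlgebra.support_coeff_mul_subset _ _ hg)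
  obtain ⟨g₃, hg₃, g₄, hg₄, rfl⟩ := Finset.mem_mul.mp (MonoidAlgebra.support_coeff_mul_subset _ _ hg₂)
  have hg3 : g₃ = hgen m := by
    have : g₃ ∈ ({hgen m} : Finset _) :=
      (by simpa [MonoidAlgebra.of_apply] using hg₃)
    simpa using this
  subst hg3
  rw [snd_mul, snd_mul, hx g₁ hg₁, isEven_um g₄ hg₄, zero_add, add_zero]
  rfl



lemma h2 : (2 : MonoidAlgebra (ZMod 2) (Gp m)) = 0 := by
  have hz : (2 : ZMod 2) = 0 := by decide
  calc (2 : MonoidAlgebra (ZMod 2) (Gp m))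
      = algebraMap (ZMod 2) (MonoidAlgebra (ZMod 2) (Gp m)) (2 : ZMod 2) :=
        (map_ofNat _ 2).symm
    _ = 0 := by rw [hz, map_zero]

lemma agen_pow4 (i : Fin m) : agen m i ^ 4 = 1 := by
  have h4 : (4 : ℕ) • ((Pi.single i 1, 0) : (Fin m → ZMod 4) × ZMod 2) = 0 := by
    refine Prod.ext ?_ ?_
    · show (4 : ℕ) • (Pi.single i 1 : Fin m → ZMod 4) = 0
      funext j
      simp only [Pi.smul_apply, Pi.single_apply, Pi.zero_apply]
      split_ifs <;> decide
    · simp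
  rw [agen, ← ofAdd_nsmul, h4, ofAdd_zero]

lemma hgen_sq : hgen m * hgen m = 1 := by
  have : ((0, 1) : (Fin m → ZMod 4) × ZMod 2) + (0, 1) = 0 := by
    refine Prod.ext (by simp) (show (1:ZMod 2)+1 = 0 by decide)
  rw [hgen, ← ofAdd_add, this, ofAdd_zero]

lemma um_sq : um m * um m = 1 := by
  rw [um, ← Finset.prod_mul_distrib]
  apply Finset.prod_eq_one
  intro i _
  set a := of (ZMod 2) (Gp m) (agen m i) with ha
  have ha4 : a ^ 4 = 1 := by rw [ha, ← map_pow, agen_pow4, map_one]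
  linear_combination (a ^ 2 + 1) * ha4 + (a ^ 2 + a ^ 3 + a ^ 4 + a ^ 5) * (h2 (m := m))

lemma uu_sq : uu m * uu m = 0 := by
  rw [uu]
  set b := of (ZMod 2) (Gp m) (hgen m) with hb
  have hb2 : b ^ 2 = 1 := by rw [hb, sq, ← map_mul, hgen_sq, map_one]
  linear_combination (um m * um m) * hb2 + um_sq (m := m) +
    (1 + b * um m) * (h2 (m := m))


end RankUAux

theorem rank_of_u (m : ℕ) (hm : 1 ≤ m) :
    Module.finrank (ZMod 2)
      (LinearMap.range (LinearMap.mulRight (ZMod 2) (uu m))) = 4 ^ m := by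
  classical
  set f := LinearMap.mulRight (ZMod 2) (uu m) with hf
  haveI hfin : Module.Finite (ZMod 2) (MonoidAlgebra (ZMod 2) (Gp m)) :=
    Module.Finite.equiv ((Finsupp.linearEquivFunOnFinite (ZMod 2) (ZMod 2) (Gp m)).symm.trans
      (MonoidAlgebra.coeffLinearEquiv (ZMod 2)).symm)
  haveI hfin2 : Module.Finite (ZMod 2) ((Fin m → ZMod 4) →₀ ZMod 2) :=
    Module.Finite.equiv (Finsupp.linearEquivFunOnFinite (ZMod 2) (ZMod 2) (Fin m → ZMod 4)).symm
  have hVdim : Module.finrank (ZMod 2) (MonoidAlgebra (ZMod 2) (Gp m)) = 2 * 4 ^ m := by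
    rw [(MonoidAlgebra.coeffLinearEquiv (ZMod 2)).finrank_eq, Module.finrank_finsupp_self]
    simp [Gp]
    ring
  have hkerinj : Function.Injective
      ((Finsupp.lcomapDomain (R := ZMod 2) (RankUAux.j1 m) (RankUAux.j1_inj m)).comp
        ((MonoidAlgebra.coeffLinearEquiv (ZMod 2)).toLinearMap.comp (LinearMap.ker f).subtype)) := by
    rw [← LinearMap.ker_eq_bot]
    rw [Submodule.eq_bot_iff]
    rintro ⟨x, hx⟩ hψ
    have hψ' : Finsupp.lcomapDomain (R := ZMod 2) (RankUAux.j1 m) (RankUAux.j1_inj m) x.coeff = 0 := hψ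
    have hxe : RankUAux.IsEven x := RankUAux.isEven_of_lcomap hψ'
    have hx0 : x * uu m = 0 := hx
    have hxw : x = x * (of (ZMod 2) (Gp m) (hgen m) * um m) := by
      rw [uu] at hx0
      linear_combination hx0 - (x * (of (ZMod 2) (Gp m) (hgen m) * um m)) * (RankUAux.h2 (m := m))
    have hxz : x = 0 := by
      rw [← MonoidAlgebra.coeff_eq_zero, ← Finsupp.support_eq_empty, Finset.eq_empty_iff_forall_notMem]
      intro g hg
      have h0 : RankUAux.snd g = 0 := hxe g hg
      have h1 : RankUAux.snd g = 1 := by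
        apply RankUAux.odd_part hxe
        rw [← hxw]; exact hg
      rw [h0] at h1
      exact absurd h1 (by decide)
    exact Subtype.ext hxz
  have hkerle : Module.finrank (ZMod 2) (LinearMap.ker f) ≤ 4 ^ m := by
    have h := LinearMap.finrank_le_finrank_of_injective hkerinj
    rwa [Module.finrank_finsupp_self, show Fintype.card (Fin m → ZMod 4) = 4 ^ m by simp] at h
  have hrk : LinearMap.range f ≤ LinearMap.ker f := by
    rintro _ ⟨x, rfl⟩
    show f (f x) = 0
    simp only [hf, LinearMap.mulRight_apply, mul_assoc, RankUAux.uu_sq, mul_zero]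
  have hsum := LinearMap.finrank_range_add_finrank_ker f
  have hmono := Submodule.finrank_mono hrk
  rw [hVdim] at hsum
  omega

end
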